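/- Suppose for every finite interval Q and all n ≥ 0 a local exclusion bound holds: the kinetic energy restricted to configurations with the particles indexed by a set A all inside Q is at least (|A|−1)·(ξ²/|Q|²)·∫ |ψ|² over that region. Then the expected local kinetic energy satisfies T^Q ≥ (ξ²/|Q|²)·( ∫_Q ρ(x) dx − 1 )₊, where ρ is the one-particle density of the normalized N-particle state ψ. -/

import Mathlib

open MeasureTheory Finset Set

lemma sum_prod_ite' {N : ℕ} (u v : Fin N → ℝ) :
    ∑ A : Finset (Fin N), ∏ l, (if l ∈ A then u l else v l) = ∏ l, (u l + v l) := by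
  rw [Finset.prod_add, ← Finset.powerset_univ]
  refine Finset.sum_congr rfl fun A hA => ?_
  rw [Finset.prod_ite]
  congr 1
  · exact Finset.prod_congr (by simp [Finset.filter_mem_eq_inter]) fun _ _ => rfl
  · exact Finset.prod_congr (by ext l; simp) fun _ _ => rfl

lemma sum_card_prod_ite' {N : ℕ} (u v : Fin N → ℝ) (h : ∀ l, u l + v l = 1) :
    ∑ A : Finset (Fin N), (A.card : ℝ) * ∏ l, (if l ∈ A then u l else v l) = ∑ j, u j := by
  have step1 : ∀ A : Finset (Fin N), (A.card : ℝ) * ∏ l, (if l ∈ A then u l else v l)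
      = ∑ j : Fin N, (if j ∈ A then ∏ l, (if l ∈ A then u l else v l) else 0) := by
    intro A
    rw [Finset.sum_ite_mem, Finset.univ_inter, Finset.sum_const, nsmul_eq_mul]
  simp_rw [step1]
  rw [Finset.sum_comm]
  refine Finset.sum_congr rfl fun j _ => ?_
  have key : ∀ A : Finset (Fin N), (if j ∈ A then ∏ l, (if l ∈ A then u l else v l) else 0)
      = ∏ l, (if l ∈ A then u l else (if l = j then 0 else v l)) := by
    intro A
    by_cases hj : j ∈ A
    · simp only [hj, if_true]
      refine Finset.prod_congr rfl fun l _ => ?_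
      by_cases hl : l ∈ A
      · simp [hl]
      · have : l ≠ j := fun e => hl (e ▸ hj)
        simp [hl, this]
    · simp only [hj, if_false]
      symm
      exact Finset.prod_eq_zero (Finset.mem_univ j) (by simp [hj])
  simp_rw [key]
  rw [sum_prod_ite' u (fun l => if l = j then 0 else v l)]
  rw [Finset.prod_eq_single j (by intro l _ hl; simp [hl, h l]) (by simp)]
  simp

theorem stmt_15 (N : ℕ) (hN : 1 ≤ N) (a b ξ : ℝ) (hab : a < b) (hξ : 0 ≤ ξ)
    (ψ : (Fin N → ℝ) → ℂ)
    (hψint : Integrable fun x => ‖ψ x‖ ^ 2)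
    (hψnorm : ∫ x, ‖ψ x‖ ^ 2 = 1)
    (T : Finset (Fin N) → ℝ) (hT0 : ∀ A, 0 ≤ T A)
    (hT : ∀ A : Finset (Fin N),
      ((A.card : ℝ) - 1) * ξ ^ 2 / (b - a) ^ 2 * ∫ x, ‖ψ x‖ ^ 2 *
          ∏ l : Fin N, (if l ∈ A then (Set.Icc a b).indicator (fun _ => (1 : ℝ)) (x l)
            else (Set.Icc a b)ᶜ.indicator (fun _ => (1 : ℝ)) (x l)) ≤ T A)
    (ρ : ℝ → ℝ)
    (hρ : ∫ t in Set.Icc a b, ρ t =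
      ∑ j : Fin N, ∫ x, ‖ψ x‖ ^ 2 * (Set.Icc a b).indicator (fun _ => (1 : ℝ)) (x j)) :
    ξ ^ 2 / (b - a) ^ 2 * max ((∫ t in Set.Icc a b, ρ t) - 1) 0 ≤
      ∑ A : Finset (Fin N), T A := by
  set c : ℝ := ξ ^ 2 / (b - a) ^ 2 with hc
  have hc0 : 0 ≤ c := div_nonneg (sq_nonneg _) (sq_nonneg _)
  set χ : ℝ → ℝ := (Set.Icc a b).indicator (fun _ => (1 : ℝ)) with hχ
  set χc : ℝ → ℝ := (Set.Icc a b)ᶜ.indicator (fun _ => (1 : ℝ)) with hχc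
  -- pointwise facts
  have hsum1 : ∀ t : ℝ, χ t + χc t = 1 := by
    intro t
    by_cases ht : t ∈ Set.Icc a b
    · rw [hχ, hχc, Set.indicator_of_mem ht, Set.indicator_of_notMem (by simpa using ht)]; ring
    · rw [hχ, hχc, Set.indicator_of_notMem ht, Set.indicator_of_mem (by simpa using ht)]; ring
  have hind01 : ∀ (s : Set ℝ) (t : ℝ), 0 ≤ s.indicator (fun _ => (1:ℝ)) t ∧ s.indicator (fun _ => (1:ℝ)) t ≤ 1 := by
    intro s t
    refine ⟨Set.indicator_nonneg (fun _ _ => zero_le_one) t, ?_⟩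
    by_cases ht : t ∈ s
    · rw [Set.indicator_of_mem ht]
    · rw [Set.indicator_of_notMem ht]; exact zero_le_one
  -- the product localisation functions
  set F : Finset (Fin N) → (Fin N → ℝ) → ℝ :=
    fun A x => ∏ l, (if l ∈ A then χ (x l) else χc (x l)) with hF
  have hmeasj : ∀ (s : Set ℝ), MeasurableSet s → ∀ j : Fin N,
      Measurable (fun x : Fin N → ℝ => s.indicator (fun _ => (1:ℝ)) (x j)) := fun s hs j =>
    (measurable_const.indicator hs).comp (measurable_pi_apply j)
  have hFmeas : ∀ A, Measurable (F A) := by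
    intro A
    apply Finset.measurable_prod
    intro l _
    by_cases hl : l ∈ A
    · simpa [hl] using hmeasj _ measurableSet_Icc l
    · simpa [hl] using hmeasj _ measurableSet_Icc.compl l
  have hF01 : ∀ A x, 0 ≤ F A x ∧ F A x ≤ 1 := by
    intro A x
    constructor
    · refine Finset.prod_nonneg fun l _ => ?_
      by_cases hl : l ∈ A
      · simpa [hl] using (hind01 _ (x l)).1
      · simpa [hl] using (hind01 _ (x l)).1
    · refine Finset.prod_le_one (fun l _ => ?_) (fun l _ => ?_)
      · by_cases hl : l ∈ A
        · simpa [hl] using (hind01 _ (x l)).1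
        · simpa [hl] using (hind01 _ (x l)).1
      · by_cases hl : l ∈ A
        · simpa [hl] using (hind01 _ (x l)).2
        · simpa [hl] using (hind01 _ (x l)).2
  have hInt : ∀ A, Integrable (fun x => ‖ψ x‖ ^ 2 * F A x) := by
    intro A
    have := hψint.bdd_mul (hFmeas A).aestronglyMeasurable (c := 1)
      (ae_of_all _ fun x => by rw [Real.norm_eq_abs, abs_of_nonneg (hF01 A x).1]; exact (hF01 A x).2)
    simpa [mul_comm] using this
  have hIntj : ∀ j : Fin N, Integrable (fun x => ‖ψ x‖ ^ 2 * χ (x j)) := by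
    intro j
    have := hψint.bdd_mul (hmeasj (Set.Icc a b) measurableSet_Icc j).aestronglyMeasurable (c := 1)
      (ae_of_all _ fun x => by rw [Real.norm_eq_abs, abs_of_nonneg (hind01 _ (x j)).1]
                               exact (hind01 _ (x j)).2)
    simpa [mul_comm] using this
  -- sum of the integrals is 1
  have hS0 : ∑ A : Finset (Fin N), ∫ x, ‖ψ x‖ ^ 2 * F A x = 1 := by
    rw [← integral_finset_sum _ (fun A _ => hInt A)]
    rw [← hψnorm]
    congr 1; funext x
    rw [← Finset.mul_sum, sum_prod_ite' (fun l => χ (x l)) (fun l => χc (x l))]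
    simp [hsum1]
  -- weighted sum is the integral of ρ
  have hS1 : ∑ A : Finset (Fin N), (A.card : ℝ) * ∫ x, ‖ψ x‖ ^ 2 * F A x
      = ∫ t in Set.Icc a b, ρ t := by
    have h1 : ∀ A : Finset (Fin N), (A.card : ℝ) * ∫ x, ‖ψ x‖ ^ 2 * F A x
        = ∫ x, (A.card : ℝ) * (‖ψ x‖ ^ 2 * F A x) := fun A =>
      (MeasureTheory.integral_const_mul _ _).symm
    simp_rw [h1]
    rw [← integral_finset_sum _ (fun A _ => (hInt A).const_mul _)]
    rw [hρ, ← integral_finset_sum _ (fun j _ => hIntj j)]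
    congr 1; funext x
    have : ∑ A : Finset (Fin N), (A.card : ℝ) * (‖ψ x‖ ^ 2 * F A x)
        = ‖ψ x‖ ^ 2 * ∑ A : Finset (Fin N), (A.card : ℝ) * F A x := by
      rw [Finset.mul_sum]; exact Finset.sum_congr rfl fun A _ => by ring
    rw [this, sum_card_prod_ite' (fun l => χ (x l)) (fun l => χc (x l))
        (fun l => hsum1 (x l)), Finset.mul_sum]
  -- the key inequality
  have key : c * ((∫ t in Set.Icc a b, ρ t) - 1) ≤ ∑ A : Finset (Fin N), T A := by
    have hterm : ∀ A : Finset (Fin N),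
        ((A.card : ℝ) - 1) * c * ∫ x, ‖ψ x‖ ^ 2 * F A x ≤ T A := by
      intro A
      have := hT A
      calc ((A.card : ℝ) - 1) * c * ∫ x, ‖ψ x‖ ^ 2 * F A x
          = ((A.card : ℝ) - 1) * ξ ^ 2 / (b - a) ^ 2 * ∫ x, ‖ψ x‖ ^ 2 * F A x := by
            rw [hc]; ring
        _ ≤ T A := this
    calc c * ((∫ t in Set.Icc a b, ρ t) - 1)
        = c * ((∑ A : Finset (Fin N), (A.card : ℝ) * ∫ x, ‖ψ x‖ ^ 2 * F A x)
            - ∑ A : Finset (Fin N), ∫ x, ‖ψ x‖ ^ 2 * F A x) := by rw [hS1, hS0]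
      _ = ∑ A : Finset (Fin N), ((A.card : ℝ) - 1) * c * ∫ x, ‖ψ x‖ ^ 2 * F A x := by
          rw [mul_sub, Finset.mul_sum, Finset.mul_sum, ← Finset.sum_sub_distrib]
          exact Finset.sum_congr rfl fun A _ => by ring
      _ ≤ ∑ A : Finset (Fin N), T A := Finset.sum_le_sum fun A _ => hterm A
  rcases le_or_gt ((∫ t in Set.Icc a b, ρ t) - 1) 0 with h | h
  · rw [max_eq_right h, mul_zero]
    exact Finset.sum_nonneg fun A _ => hT0 A
  · rw [max_eq_left h.le]
    exact key
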